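/- (Disturbance-only gain scaling.) Fix d ∈ (−1,1), β > 0 and α₁, α₂, ã > 0. For L > 0 define S_ν(L) := {γ ∈ ℝ : γ > 0 and Ĵ(z₁,z₂,0,δ; γ, L) < 0 for all (z₁,z₂,δ) ∈ ℝ³∖{(0,0,0)}}. Then for every L > 0 and γ > 0: γ ∈ S_ν(L) ⟺ γ·L^{(1−d)/(1+d)} ∈ S_ν(1); consequently inf S_ν(L) = L^{−(1−d)/(1+d)} · inf S_ν(1). (If no noise is present, the estimated homogeneous L₂-gain is inversely proportional to the power (1−d)/(1+d) of the gain-scaling L.) -/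

import Mathlib

open Pointwise


/-- Sign-preserving power `⌊x⌉^p = sign(x)·|x|^p`. -/
noncomputable def spow (x p : ℝ) : ℝ := Real.sign x * |x| ^ p

/-- The value function `Ĵ(z₁,z₂,ν,δ; γ, L)` of the homogeneous differential
dissipation inequality for the second-order homogeneous differentiator. -/
noncomputable def Jhat (d β α1 α2 a L γ z1 z2 ν δ : ℝ) : ℝ :=
  a * (-α1 * (spow z1 (1/(1-d)) - z2) * (spow (z1 + ν) (1/(1-d)) - z2)
        + (-z1 + (1 + β) * spow z2 (1 - d)) *
            (-(α2 / α1) * spow (z1 + ν) ((1+d)/(1-d)) + δ / (L ^ 2 * α1)))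
    + α1 ^ 2 * z2 ^ 2 - (γ / L) ^ 2 * (|ν| ^ (2/(1-d)) + |δ| ^ (2/(1+d)))

/-- The set of certified gains in the disturbance-only case (`ν ≡ 0`). -/
def Snu (d β α1 α2 a L : ℝ) : Set ℝ :=
  {γ : ℝ | 0 < γ ∧ ∀ z1 z2 δ : ℝ, (z1, z2, δ) ≠ ((0:ℝ), (0:ℝ), (0:ℝ)) →
    Jhat d β α1 α2 a L γ z1 z2 0 δ < 0}

lemma Jhat_scale (d β α1 α2 a L γ z1 z2 δ : ℝ) (hd : d ∈ Set.Ioo (-1:ℝ) 1)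
    (hL : 0 < L) :
    Jhat d β α1 α2 a L γ z1 z2 0 δ
      = Jhat d β α1 α2 a 1 (γ * L ^ ((1-d)/(1+d))) z1 z2 0 (δ / L ^ 2) := by
  have h1 : (0:ℝ) < 1 - d := by linarith [hd.2]
  have h2 : (0:ℝ) < 1 + d := by linarith [hd.1]
  have hL2 : (0:ℝ) < L ^ 2 := by positivity
  have key : (γ / L) ^ 2 * |δ| ^ (2/(1+d))
      = (γ * L ^ ((1-d)/(1+d)) / 1) ^ 2 * |δ / L ^ 2| ^ (2/(1+d)) := by
    rw [abs_div, abs_of_pos hL2, Real.div_rpow (abs_nonneg δ) hL2.le]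
    have e1 : ((L:ℝ) ^ 2) ^ (2/(1+d)) = L ^ (2 * (2/(1+d))) := by
      rw [← Real.rpow_natCast L 2, ← Real.rpow_mul hL.le]; norm_num
    have e2 : (L ^ ((1-d)/(1+d))) ^ 2 = L ^ ((1-d)/(1+d) * 2) := by
      rw [← Real.rpow_natCast (L ^ ((1-d)/(1+d))) 2, ← Real.rpow_mul hL.le]; norm_num
    have e3 : L ^ ((1-d)/(1+d) * 2) * L ^ 2 = L ^ (2 * (2/(1+d))) := by
      rw [← Real.rpow_natCast L 2, ← Real.rpow_add hL]
      congr 1; field_simp; ring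
    rw [div_one, mul_pow, e1, e2]
    rw [← e3]
    field_simp
  unfold Jhat
  rw [add_zero, abs_zero, Real.zero_rpow (div_pos two_pos h1).ne', zero_add, zero_add,
    key]
  ring

lemma Snu_mem_iff (d β α1 α2 a L γ : ℝ) (hd : d ∈ Set.Ioo (-1:ℝ) 1) (hL : 0 < L) :
    γ ∈ Snu d β α1 α2 a L ↔ γ * L ^ ((1-d)/(1+d)) ∈ Snu d β α1 α2 a 1 := by
  have hLe : (0:ℝ) < L ^ ((1-d)/(1+d)) := Real.rpow_pos_of_pos hL _
  have hL2 : (0:ℝ) < L ^ 2 := by positivity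
  constructor
  · rintro ⟨hγ, h⟩
    refine ⟨by positivity, fun z1 z2 δ hne => ?_⟩
    have hne' : (z1, z2, δ * L ^ 2) ≠ ((0:ℝ), (0:ℝ), (0:ℝ)) := by
      simp only [ne_eq, Prod.mk.injEq, not_and] at hne ⊢
      intro e1 e2 e3
      exact hne e1 e2 (by
        rcases mul_eq_zero.mp e3 with h' | h'
        · exact h'
        · exact absurd h' hL2.ne')
    have := h z1 z2 (δ * L ^ 2) hne'
    rw [Jhat_scale d β α1 α2 a L γ z1 z2 (δ * L ^ 2) hd hL,
      mul_div_cancel_right₀ δ hL2.ne'] at this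
    exact this
  · rintro ⟨hγ', h⟩
    have hγ : 0 < γ := by
      by_contra hc
      push_neg at hc
      nlinarith
    refine ⟨hγ, fun z1 z2 δ hne => ?_⟩
    rw [Jhat_scale d β α1 α2 a L γ z1 z2 δ hd hL]
    apply h z1 z2 (δ / L ^ 2)
    simp only [ne_eq, Prod.mk.injEq, not_and] at hne ⊢
    intro e1 e2 e3
    exact hne e1 e2 (by
      rcases div_eq_zero_iff.mp e3 with h' | h'
      · exact h'
      · exact absurd h' hL2.ne')

/-- Disturbance-only gain scaling: `γ ∈ S_ν(L) ↔ γ·L^{(1-d)/(1+d)} ∈ S_ν(1)`, hence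
the estimated homogeneous `L₂`-gain is inversely proportional to a power of the
gain-scaling: `inf S_ν(L) = L^{-(1-d)/(1+d)} · inf S_ν(1)`. -/
theorem stmt16 (d β α1 α2 a : ℝ) (hd : d ∈ Set.Ioo (-1:ℝ) 1) (hβ : 0 < β)
    (hα1 : 0 < α1) (hα2 : 0 < α2) (ha : 0 < a) :
    (∀ L > (0:ℝ), ∀ γ > (0:ℝ),
      (γ ∈ Snu d β α1 α2 a L ↔ γ * L ^ ((1-d)/(1+d)) ∈ Snu d β α1 α2 a 1)) ∧
    (∀ L > (0:ℝ),
      sInf (Snu d β α1 α2 a L) = L ^ (-(1-d)/(1+d)) * sInf (Snu d β α1 α2 a 1)) := by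
  constructor
  · intro L hL γ _
    exact Snu_mem_iff d β α1 α2 a L γ hd hL
  · intro L hL
    have hLe : (0:ℝ) < L ^ ((1-d)/(1+d)) := Real.rpow_pos_of_pos hL _
    have hc : L ^ (-(1-d)/(1+d)) = (L ^ ((1-d)/(1+d)))⁻¹ := by
      rw [neg_div, Real.rpow_neg hL.le]
    have hset : Snu d β α1 α2 a L
        = (L ^ (-(1-d)/(1+d))) • Snu d β α1 α2 a 1 := by
      ext γ
      rw [Set.mem_smul_set_iff_inv_smul_mem₀ (by rw [hc]; exact (inv_pos.mpr hLe).ne')]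
      rw [hc, inv_inv, smul_eq_mul, mul_comm]
      exact Snu_mem_iff d β α1 α2 a L γ hd hL
    rw [hset, Real.sInf_smul_of_nonneg (by rw [hc]; positivity), smul_eq_mul]
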